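/- arXiv:1507.05316 — 7 statements merged into one kernel-verified Lean document; each statement's English description precedes it below -/
import Mathlib

section
/- Let f be a Boolean function with n variables with f ≠ 0 (so also μₙ(f) ≠ 0). Then deg(f) + deg(μₙ(f)) ≥ n. -/
/-- Möbius transform of a Boolean function with n variables:
`μₙ(f)(u) = ⊕_{v ≼ u} f(v)` where `≼` is componentwise. -/
def mobius {n : ℕ} (f : (Fin n → ZMod 2) → ZMod 2) : (Fin n → ZMod 2) → ZMod 2 :=
  fun u => ∑ v ∈ Finset.univ.filter (fun v : Fin n → ZMod 2 => ∀ i, (v i).val ≤ (u i).val), f v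
/-- Hamming weight of a vector in 𝔽₂ⁿ. -/
def hwt {n : ℕ} (u : Fin n → ZMod 2) : ℕ :=
  (Finset.univ.filter (fun i => u i = 1)).card

/-- Algebraic degree: the maximum Hamming weight of `u` with `μₙ(f)(u) = 1`. -/
def degree {n : ℕ} (f : (Fin n → ZMod 2) → ZMod 2) : ℕ :=
  (Finset.univ.filter (fun u => mobius f u = 1)).sup hwt

open Finset

-- small ZMod 2 facts
private lemma z2_add_self (a : ZMod 2) : a + a = 0 := by revert a; decide
private lemma z2_add_one_ne (a : ZMod 2) : a + 1 ≠ a := by revert a; decide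
private lemma z2_add_one_add_one (a : ZMod 2) : a + 1 + 1 = a := by revert a; decide
private lemma z2_antisymm (a b : ZMod 2) (h1 : a.val ≤ b.val) (h2 : b.val ≤ a.val) : a = b := by
  revert a b; decide
private lemma z2_lt_cases (a b : ZMod 2) (hne : a ≠ b) (h : a.val ≤ b.val) : a = 0 ∧ b = 1 := by
  revert a b; decide
private lemma z2_val_le_one (a : ZMod 2) : a.val ≤ 1 := by revert a; decide
private lemma z2_le_of_one (a b : ZMod 2) (h : a.val ≤ b.val) (ha : a = 1) : b = 1 := by
  revert a b; decide
private lemma z2_ne_zero (a : ZMod 2) (h : a ≠ 0) : a = 1 := by revert a; decide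
private lemma z2_ne_one (a : ZMod 2) (h : a ≠ 1) : a = 0 := by revert a; decide

private lemma update_flip_flip {n : ℕ} (i : Fin n) (v : Fin n → ZMod 2) :
    Function.update (Function.update v i (v i + 1)) i
      (Function.update v i (v i + 1) i + 1) = v := by
  funext j
  by_cases h : j = i
  · subst h; simp [Function.update_self, z2_add_one_add_one]
  · simp [Function.update_of_ne h]

/-- If a predicate on 𝔽₂ⁿ is stable under flipping coordinate `i`, the sum of a constant over it
vanishes in characteristic 2. -/
private lemma sum_flip_zero {n : ℕ} (P : (Fin n → ZMod 2) → Prop) [DecidablePred P] (i : Fin n)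
    (hP : ∀ v, P v → P (Function.update v i (v i + 1))) (c : ZMod 2) :
    ∑ _v ∈ Finset.univ.filter P, c = 0 := by
  refine Finset.sum_involution (fun v _ => Function.update v i (v i + 1)) ?_ ?_ ?_ ?_
  · intro a _; exact z2_add_self c
  · intro a _ _ h
    have := congrFun h i
    simp only [Function.update_self] at this
    exact z2_add_one_ne _ this
  · intro a ha
    simp only [Finset.mem_filter, Finset.mem_univ, true_and] at ha ⊢
    exact hP a ha
  · intro a _; exact update_flip_flip i a

/-- counting lemma A: sum of a constant over `{v : w ≼ v ≼ u}`. -/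
private lemma sum_between {n : ℕ} (w u : Fin n → ZMod 2) (c : ZMod 2) :
    ∑ _v ∈ Finset.univ.filter
        (fun v : Fin n → ZMod 2 => (∀ i, (w i).val ≤ (v i).val) ∧ (∀ i, (v i).val ≤ (u i).val)), c
      = if w = u then c else 0 := by
  by_cases h : w = u
  · subst h
    rw [if_pos rfl]
    have hset : Finset.univ.filter
        (fun v : Fin n → ZMod 2 => (∀ i, (w i).val ≤ (v i).val) ∧ (∀ i, (v i).val ≤ (w i).val)) = {w} := by
      ext v
      simp only [mem_filter, mem_univ, true_and, mem_singleton]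
      constructor
      · rintro ⟨h1, h2⟩; funext i; exact z2_antisymm _ _ (h2 i) (h1 i)
      · rintro rfl; exact ⟨fun i => le_refl _, fun i => le_refl _⟩
    rw [hset, Finset.sum_singleton]
  · rw [if_neg h]
    by_cases hle : ∀ i, (w i).val ≤ (u i).val
    · have hex : ∃ i, w i ≠ u i := by
        by_contra hc; push_neg at hc; exact h (funext hc)
      obtain ⟨i, hi⟩ := hex
      obtain ⟨hw0, hu1⟩ := z2_lt_cases _ _ hi (hle i)
      refine sum_flip_zero _ i ?_ c
      rintro v ⟨h1, h2⟩
      refine ⟨fun j => ?_, fun j => ?_⟩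
      · by_cases hj : j = i
        · subst hj; rw [hw0]; exact Nat.zero_le _
        · rw [Function.update_of_ne hj]; exact h1 j
      · by_cases hj : j = i
        · subst hj; rw [hu1]; exact z2_val_le_one _
        · rw [Function.update_of_ne hj]; exact h2 j
    · have hset : Finset.univ.filter
          (fun v : Fin n → ZMod 2 => (∀ i, (w i).val ≤ (v i).val) ∧ (∀ i, (v i).val ≤ (u i).val)) = ∅ := by
        ext v
        simp only [mem_filter, mem_univ, true_and, notMem_empty, iff_false, not_and]
        intro h1 h2
        exact hle fun i => le_trans (h1 i) (h2 i)
      rw [hset, Finset.sum_empty]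

/-- counting lemma B: sum of a constant over `{v : u ≼ v ∧ w ≼ v}`. -/
private lemma sum_above {n : ℕ} (u w : Fin n → ZMod 2) (c : ZMod 2) :
    ∑ _v ∈ Finset.univ.filter
        (fun v : Fin n → ZMod 2 => (∀ i, (u i).val ≤ (v i).val) ∧ (∀ i, (w i).val ≤ (v i).val)), c
      = if ∀ i, u i = 0 → w i = 1 then c else 0 := by
  by_cases h : ∀ i, u i = 0 → w i = 1
  · rw [if_pos h]
    have hset : Finset.univ.filter
        (fun v : Fin n → ZMod 2 => (∀ i, (u i).val ≤ (v i).val) ∧ (∀ i, (w i).val ≤ (v i).val))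
        = {fun _ => 1} := by
      ext v
      simp only [mem_filter, mem_univ, true_and, mem_singleton]
      constructor
      · rintro ⟨h1, h2⟩
        funext i
        by_cases hu : u i = 0
        · exact z2_le_of_one _ _ (h2 i) (h i hu)
        · exact z2_le_of_one _ _ (h1 i) (z2_ne_zero _ hu)
      · rintro rfl
        exact ⟨fun i => z2_val_le_one _, fun i => z2_val_le_one _⟩
    rw [hset, Finset.sum_singleton]
  · rw [if_neg h]
    push_neg at h
    obtain ⟨i, hu0, hw⟩ := h
    have hw0 : w i = 0 := z2_ne_one _ hw
    refine sum_flip_zero _ i ?_ c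
    rintro v ⟨h1, h2⟩
    refine ⟨fun j => ?_, fun j => ?_⟩
    · by_cases hj : j = i
      · subst hj; rw [hu0]; exact Nat.zero_le _
      · rw [Function.update_of_ne hj]; exact h1 j
    · by_cases hj : j = i
      · subst hj; rw [hw0]; exact Nat.zero_le _
      · rw [Function.update_of_ne hj]; exact h2 j

private lemma ite_sum {α : Type*} [Fintype α] (P : Prop) [Decidable P] (g : α → ZMod 2) :
    (if P then ∑ w ∈ Finset.univ, g w else 0) = ∑ w ∈ Finset.univ, if P then g w else 0 := by
  split <;> simp

/-- The Möbius transform is an involution. -/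
lemma mobius_mobius {n : ℕ} (f : (Fin n → ZMod 2) → ZMod 2) : mobius (mobius f) = f := by
  funext u
  unfold mobius
  rw [Finset.sum_filter]
  simp_rw [Finset.sum_filter, ite_sum, ← ite_and]
  rw [Finset.sum_comm]
  have hinner : ∀ w : Fin n → ZMod 2, (∑ v : Fin n → ZMod 2,
      if (∀ i, (v i).val ≤ (u i).val) ∧ (∀ i, (w i).val ≤ (v i).val) then f w else 0)
      = if w = u then f w else 0 := by
    intro w
    rw [← Finset.sum_filter]
    have hfe : Finset.univ.filter
        (fun v : Fin n → ZMod 2 => (∀ i, (v i).val ≤ (u i).val) ∧ (∀ i, (w i).val ≤ (v i).val))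
        = Finset.univ.filter
        (fun v : Fin n → ZMod 2 => (∀ i, (w i).val ≤ (v i).val) ∧ (∀ i, (v i).val ≤ (u i).val)) := by
      ext v
      simp [and_comm]
    rw [hfe]
    exact sum_between w u (f w)
  simp_rw [hinner]
  simp

/-- The key identity : `∑_{v ≽ u} μf(v) = ∑_{w ≽ ū} f(w)`. -/
private lemma sum_up_eq {n : ℕ} (f : (Fin n → ZMod 2) → ZMod 2) (u : Fin n → ZMod 2) :
    ∑ v ∈ Finset.univ.filter (fun v => ∀ i, (u i).val ≤ (v i).val), mobius f v
      = ∑ w ∈ Finset.univ.filter (fun w => ∀ i, u i = 0 → w i = 1), f w := by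
  unfold mobius
  rw [Finset.sum_filter]
  simp_rw [Finset.sum_filter, ite_sum, ← ite_and]
  rw [Finset.sum_comm]
  have hinner : ∀ w : Fin n → ZMod 2, (∑ v : Fin n → ZMod 2,
      if (∀ i, (u i).val ≤ (v i).val) ∧ (∀ i, (w i).val ≤ (v i).val) then f w else 0)
      = if ∀ i, u i = 0 → w i = 1 then f w else 0 := by
    intro w
    rw [← Finset.sum_filter]
    exact sum_above u w (f w)
  simp_rw [hinner]

theorem stmt5 (n : ℕ) (f : (Fin n → ZMod 2) → ZMod 2) (hf : f ≠ 0) :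
    n ≤ degree f + degree (mobius f) := by
  classical
  -- μf ≠ 0
  have hμ : mobius f ≠ 0 := by
    intro h
    apply hf
    rw [← mobius_mobius f, h]
    funext u
    simp [mobius]
  -- a maximal-weight monomial u
  have hS : (Finset.univ.filter (fun u => mobius f u = 1)).Nonempty := by
    obtain ⟨u, hu⟩ := Function.ne_iff.mp hμ
    exact ⟨u, Finset.mem_filter.mpr ⟨Finset.mem_univ _, z2_ne_zero _ hu⟩⟩
  obtain ⟨u, huS, hud⟩ := Finset.exists_mem_eq_sup _ hS hwt
  have hu1 : mobius f u = 1 := (Finset.mem_filter.mp huS).2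
  have hdf : degree f = hwt u := hud
  -- sum of μf over v ≽ u is 1
  have hsum : ∑ v ∈ Finset.univ.filter (fun v => ∀ i, (u i).val ≤ (v i).val), mobius f v = 1 := by
    rw [Finset.sum_eq_single u]
    · exact hu1
    · intro v hv hne
      simp only [Finset.mem_filter, Finset.mem_univ, true_and] at hv
      by_contra hc
      have hv1 : mobius f v = 1 := z2_ne_zero _ hc
      have hle : hwt v ≤ degree f :=
        Finset.le_sup (Finset.mem_filter.mpr ⟨Finset.mem_univ _, hv1⟩)
      -- but hwt v > hwt u
      have hsub : (Finset.univ.filter (fun i => u i = 1)) ⊂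
          (Finset.univ.filter (fun i => v i = 1)) := by
        constructor
        · intro i hi
          simp only [Finset.mem_filter, Finset.mem_univ, true_and] at hi ⊢
          exact z2_le_of_one _ _ (hv i) hi
        · intro hcon
          apply hne.symm
          have hex : ∃ i, u i ≠ v i := by
            by_contra hcc; push_neg at hcc; exact hne (funext fun i => (hcc i).symm)
          obtain ⟨i, hi⟩ := hex
          obtain ⟨h0, h1⟩ := z2_lt_cases _ _ hi (hv i)
          have : i ∈ (Finset.univ.filter (fun i => u i = 1)) :=
            hcon (Finset.mem_filter.mpr ⟨Finset.mem_univ _, h1⟩)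
          simp only [Finset.mem_filter, Finset.mem_univ, true_and] at this
          rw [h0] at this
          exact absurd this (by decide)
      have : hwt u < hwt v := Finset.card_lt_card hsub
      omega
    · intro h
      exact absurd (Finset.mem_filter.mpr ⟨Finset.mem_univ _, fun i => le_refl _⟩) h
  -- so the sum of f over w ≽ ū is 1, hence some w ≽ ū has f w = 1
  rw [sum_up_eq] at hsum
  have hne0 : ∑ w ∈ Finset.univ.filter (fun w => ∀ i, u i = 0 → w i = 1), f w ≠ 0 := by
    rw [hsum]; decide
  obtain ⟨w, hwmem, hwne⟩ := Finset.exists_ne_zero_of_sum_ne_zero hne0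
  simp only [Finset.mem_filter, Finset.mem_univ, true_and] at hwmem
  have hw1 : f w = 1 := z2_ne_zero _ hwne
  -- degree (mobius f) ≥ hwt w
  have hdm : hwt w ≤ degree (mobius f) := by
    apply Finset.le_sup
    rw [Finset.mem_filter]
    refine ⟨Finset.mem_univ _, ?_⟩
    rw [mobius_mobius]
    exact hw1
  -- hwt w ≥ n - hwt u
  have hcard : (Finset.univ.filter (fun i => u i = 1)).card
      + (Finset.univ.filter (fun i => ¬ u i = 1)).card = n := by
    rw [Finset.card_filter_add_card_filter_not]
    simp
  have hsubw : (Finset.univ.filter (fun i : Fin n => ¬ u i = 1))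
      ⊆ (Finset.univ.filter (fun i => w i = 1)) := by
    intro i hi
    simp only [Finset.mem_filter, Finset.mem_univ, true_and] at hi ⊢
    exact hwmem i (z2_ne_one _ hi)
  have hwge : (Finset.univ.filter (fun i : Fin n => ¬ u i = 1)).card ≤ hwt w :=
    Finset.card_le_card hsubw
  have h1 : hwt u = (Finset.univ.filter (fun i => u i = 1)).card := rfl
  omega
end

section
/- Let n ∈ ℕ and 0 < k < n. Let f₁ be a Boolean function with k variables and f₂ a Boolean function with n−k variables, and identify 𝔽₂ⁿ with 𝔽₂ᵏ × 𝔽₂ⁿ⁻ᵏ. Define f(y,z) = f₁(y)·f₂(z) and g(y,z) = f₁(y) ⊕ f₂(z). Then for all y ∈ 𝔽₂ᵏ and z ∈ 𝔽₂ⁿ⁻ᵏ: μₙ(f)(y,z) = μₖ(f₁)(y)·μₙ₋ₖ(f₂)(z), and μₙ(g)(y,z) = (∏ᵢ(1 ⊕ zᵢ))·μₖ(f₁)(y) ⊕ (∏ᵢ(1 ⊕ yᵢ))·μₙ₋ₖ(f₂)(z). -/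
/-- Möbius transform on 𝔽₂^k × 𝔽₂^m, identified with 𝔽₂^(k+m) with the
componentwise partial order. -/
def mobiusPP {k m : ℕ} (F : ((Fin k → ZMod 2) × (Fin m → ZMod 2)) → ZMod 2) :
    ((Fin k → ZMod 2) × (Fin m → ZMod 2)) → ZMod 2 :=
  fun p => ∑ q ∈ Finset.univ.filter
    (fun q : (Fin k → ZMod 2) × (Fin m → ZMod 2) =>
      (∀ i, (q.1 i).val ≤ (p.1 i).val) ∧ (∀ j, (q.2 j).val ≤ (p.2 j).val)), F q


open Finset

def S {m : ℕ} (u : Fin m → ZMod 2) : Finset (Fin m → ZMod 2) :=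
  Finset.univ.filter (fun v => ∀ i, (v i).val ≤ (u i).val)

lemma S_piFinset {m : ℕ} (u : Fin m → ZMod 2) :
    S u = Fintype.piFinset (fun i => Finset.univ.filter (fun c : ZMod 2 => c.val ≤ (u i).val)) := by
  ext v; simp [S, Fintype.mem_piFinset]

lemma card_S {m : ℕ} (u : Fin m → ZMod 2) :
    ((S u).card : ZMod 2) = ∏ i, (1 + u i) := by
  rw [S_piFinset, Fintype.card_piFinset, Nat.cast_prod]
  refine Finset.prod_congr rfl fun i _ => ?_
  revert u
  intro u
  have : ∀ a : ZMod 2,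
      (((Finset.univ.filter (fun c : ZMod 2 => c.val ≤ a.val)).card : ZMod 2) = 1 + a) := by decide
  exact this (u i)

lemma split_sum {k m : ℕ} (F : ((Fin k → ZMod 2) × (Fin m → ZMod 2)) → ZMod 2)
    (y : Fin k → ZMod 2) (z : Fin m → ZMod 2) :
    mobiusPP F (y, z) = ∑ a ∈ S y, ∑ b ∈ S z, F (a, b) := by
  rw [mobiusPP, ← Finset.sum_product']
  congr 1
  ext q
  simp [S, Finset.mem_product]

theorem stmt7 (n k : ℕ) (hk : 0 < k) (hkn : k < n)
    (f1 : (Fin k → ZMod 2) → ZMod 2) (f2 : (Fin (n - k) → ZMod 2) → ZMod 2)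
    (f g : ((Fin k → ZMod 2) × (Fin (n - k) → ZMod 2)) → ZMod 2)
    (hf : ∀ y z, f (y, z) = f1 y * f2 z)
    (hg : ∀ y z, g (y, z) = f1 y + f2 z) :
    ∀ (y : Fin k → ZMod 2) (z : Fin (n - k) → ZMod 2),
      mobiusPP f (y, z) = mobius f1 y * mobius f2 z ∧
      mobiusPP g (y, z) =
        (∏ j, (1 + z j)) * mobius f1 y + (∏ i, (1 + y i)) * mobius f2 z := by
  intro y z
  have hm1 : mobius f1 y = ∑ a ∈ S y, f1 a := rfl
  have hm2 : mobius f2 z = ∑ b ∈ S z, f2 b := rfl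
  constructor
  · rw [split_sum, hm1, hm2, Finset.sum_mul_sum]
    exact Finset.sum_congr rfl fun a _ => Finset.sum_congr rfl fun b _ => hf a b
  · rw [split_sum, hm1, hm2, ← card_S z, ← card_S y]
    simp only [hg, Finset.sum_add_distrib, Finset.sum_const, nsmul_eq_mul, Finset.mul_sum,
      Finset.sum_mul]
end

section
/- For every u ∈ 𝔽₂ⁿ, the Boolean function h_u = x^u ⊕ M_u is coincident, i.e. μₙ(h_u) = h_u, and moreover h_u = ⊕_{v : u ≺ v} x^v = ⊕_{v : u ≺ v} M_v (as Boolean functions of a ∈ 𝔽₂ⁿ). -/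
lemma zval_le {x y : ZMod 2} : x.val ≤ y.val ↔ (x = 1 → y = 1) := by revert x y; decide

lemma zval_inj {x y : ZMod 2} (h : x.val = y.val) : x = y := by revert x y h; decide

lemma mono_eq {n : ℕ} (u a : Fin n → ZMod 2) :
    (∏ i ∈ Finset.univ.filter (fun i => u i = 1), a i)
      = if (∀ i, (u i).val ≤ (a i).val) then 1 else 0 := by
  split_ifs with h
  · apply Finset.prod_eq_one
    intro i hi
    rw [Finset.mem_filter] at hi
    exact zval_le.mp (h i) hi.2
  · push_neg at h
    obtain ⟨i, hi⟩ := h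
    have key : u i = 1 ∧ a i = 0 := by
      revert hi; generalize u i = x; generalize a i = y; revert x y; decide
    exact Finset.prod_eq_zero (by simp [key.1]) key.2

/-- Parity of the subcube `{v : u ≼ v ≼ a}`. -/
lemma sumS {n : ℕ} (u a : Fin n → ZMod 2) :
    ∑ v ∈ Finset.univ.filter
      (fun v : Fin n → ZMod 2 => (∀ i, (u i).val ≤ (v i).val) ∧ (∀ i, (v i).val ≤ (a i).val)),
      (1 : ZMod 2) = if a = u then 1 else 0 := by
  by_cases hau : a = u
  · subst hau
    rw [if_pos rfl]
    have : Finset.univ.filter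
        (fun v : Fin n → ZMod 2 => (∀ i, (a i).val ≤ (v i).val) ∧ (∀ i, (v i).val ≤ (a i).val))
        = {a} := by
      ext v
      simp only [Finset.mem_filter, Finset.mem_univ, true_and, Finset.mem_singleton]
      constructor
      · rintro ⟨h1, h2⟩
        funext i
        exact zval_inj (le_antisymm (h2 i) (h1 i))
      · rintro rfl; exact ⟨fun _ => le_rfl, fun _ => le_rfl⟩
    rw [this, Finset.sum_singleton]
  · rw [if_neg hau]
    by_cases hle : ∀ i, (u i).val ≤ (a i).val
    · -- u ≺ a : pick i0 with u i0 ≠ a i0, flip it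
      have : ∃ i, u i ≠ a i := by
        by_contra hc
        push_neg at hc
        exact hau (funext fun i => (hc i).symm)
      obtain ⟨i0, hi0⟩ := this
      have hu0 : u i0 = 0 ∧ a i0 = 1 := by
        have h1 := hle i0
        revert hi0 h1; generalize u i0 = x; generalize a i0 = y; revert x y; decide
      refine Finset.sum_involution
        (fun v _ => Function.update v i0 (v i0 + 1)) ?_ ?_ ?_ ?_
      · intro v hv; decide
      · intro v hv _
        intro hc
        have := congrFun hc i0
        simp only [Function.update, dif_pos rfl] at this
        revert this; generalize v i0 = x; revert x; decide
      · intro v hv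
        simp only [Finset.mem_filter, Finset.mem_univ, true_and] at hv ⊢
        constructor
        · intro i
          rcases eq_or_ne i i0 with rfl | hne
          · simp [Function.update, hu0.1]
          · simp only [Function.update, dif_neg hne]; exact hv.1 i
        · intro i
          rcases eq_or_ne i i0 with rfl | hne
          · simp only [Function.update, dif_pos rfl]
            rw [hu0.2]
            have : ∀ x : ZMod 2, x.val ≤ (1 : ZMod 2).val := by decide
            exact this _
          · simp only [Function.update, dif_neg hne]; exact hv.2 i
      · intro v hv
        funext i
        rcases eq_or_ne i i0 with rfl | hne
        · simp only [Function.update, dif_pos rfl]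
          generalize v i = x; revert x; decide
        · simp [Function.update, hne]
    · -- set is empty
      push_neg at hle
      obtain ⟨i, hi⟩ := hle
      rw [Finset.filter_false_of_mem, Finset.sum_empty]
      rintro v _ ⟨h1, h2⟩
      exact absurd (le_trans (h1 i) (h2 i)) (not_le.mpr hi)

/-- The monomial `x^u`. -/
def monomial {n : ℕ} (u : Fin n → ZMod 2) : (Fin n → ZMod 2) → ZMod 2 :=
  fun a => ∏ i ∈ Finset.univ.filter (fun i => u i = 1), a i

/-- The minterm `M_u`. -/
def minterm {n : ℕ} (u : Fin n → ZMod 2) : (Fin n → ZMod 2) → ZMod 2 :=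
  fun a => if a = u then 1 else 0


lemma mono_eq' {n : ℕ} (u a : Fin n → ZMod 2) :
    monomial u a = if (∀ i, (u i).val ≤ (a i).val) then 1 else 0 := mono_eq u a

theorem stmt8 (n : ℕ) (u : Fin n → ZMod 2) :
    mobius (fun a => monomial u a + minterm u a) = (fun a => monomial u a + minterm u a) ∧
    (∀ a, monomial u a + minterm u a =
      ∑ v ∈ Finset.univ.filter
        (fun v : Fin n → ZMod 2 => (∀ i, (u i).val ≤ (v i).val) ∧ u ≠ v),
        monomial v a) ∧
    (∀ a, monomial u a + minterm u a =
      ∑ v ∈ Finset.univ.filter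
        (fun v : Fin n → ZMod 2 => (∀ i, (u i).val ≤ (v i).val) ∧ u ≠ v),
        minterm v a) := by
  refine ⟨?_, ?_, ?_⟩
  · funext a
    unfold mobius
    rw [Finset.sum_add_distrib]
    have hm : ∑ v ∈ Finset.univ.filter (fun v : Fin n → ZMod 2 => ∀ i, (v i).val ≤ (a i).val),
        minterm u v = monomial u a := by
      simp only [minterm, Finset.sum_ite_eq', Finset.mem_filter, Finset.mem_univ, true_and,
        mono_eq']
    have hmo : ∑ v ∈ Finset.univ.filter (fun v : Fin n → ZMod 2 => ∀ i, (v i).val ≤ (a i).val),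
        monomial u v = minterm u a := by
      simp only [mono_eq']
      rw [← Finset.sum_filter, Finset.filter_filter]
      have hfilter : Finset.univ.filter (fun v : Fin n → ZMod 2 =>
          (∀ i, (v i).val ≤ (a i).val) ∧ (∀ i, (u i).val ≤ (v i).val))
          = Finset.univ.filter (fun v : Fin n → ZMod 2 =>
          (∀ i, (u i).val ≤ (v i).val) ∧ (∀ i, (v i).val ≤ (a i).val)) := by
        apply Finset.filter_congr
        intro v _
        exact and_comm
      rw [hfilter, sumS u a]
      rfl
    rw [hm, hmo, add_comm]
  · intro a
    simp only [mono_eq']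
    rw [← Finset.sum_filter, Finset.filter_filter]
    have key := Finset.sum_filter_add_sum_filter_not
      (Finset.univ.filter (fun v : Fin n → ZMod 2 =>
        (∀ i, (u i).val ≤ (v i).val) ∧ (∀ i, (v i).val ≤ (a i).val)))
      (fun v => v = u) (fun _ => (1 : ZMod 2))
    have heq : (Finset.univ.filter (fun v : Fin n → ZMod 2 =>
        (∀ i, (u i).val ≤ (v i).val) ∧ (∀ i, (v i).val ≤ (a i).val))).filter (fun v => ¬ v = u)
        = Finset.univ.filter (fun v : Fin n → ZMod 2 =>
          ((∀ i, (u i).val ≤ (v i).val) ∧ u ≠ v) ∧ (∀ i, (v i).val ≤ (a i).val)) := by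
      rw [Finset.filter_filter]
      apply Finset.filter_congr
      intro v _
      constructor
      · rintro ⟨⟨h1, h2⟩, h3⟩; exact ⟨⟨h1, fun hc => h3 hc.symm⟩, h2⟩
      · rintro ⟨⟨h1, h2⟩, h3⟩; exact ⟨⟨h1, h3⟩, fun hc => h2 hc.symm⟩
    have heq2 : (Finset.univ.filter (fun v : Fin n → ZMod 2 =>
        (∀ i, (u i).val ≤ (v i).val) ∧ (∀ i, (v i).val ≤ (a i).val))).filter (fun v => v = u)
        = if (∀ i, (u i).val ≤ (a i).val) then {u} else ∅ := by
      rw [Finset.filter_eq']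
      simp only [Finset.mem_filter, Finset.mem_univ, true_and]
      have hrefl : ∀ i, (u i).val ≤ (u i).val := fun _ => le_rfl
      split_ifs <;> first | rfl | tauto
    rw [heq, heq2, sumS u a] at key
    have hval : ∑ v ∈ Finset.univ.filter (fun v : Fin n → ZMod 2 =>
        ((∀ i, (u i).val ≤ (v i).val) ∧ u ≠ v) ∧ (∀ i, (v i).val ≤ (a i).val)),
        (1 : ZMod 2)
        = (if a = u then 1 else 0) + (if (∀ i, (u i).val ≤ (a i).val) then 1 else 0) := by
      have h2 : ∀ x y z : ZMod 2, x + y = z → y = z + x := by decide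
      apply h2 _ _ _ key |>.trans
      congr 1
      split_ifs <;> simp
    rw [hval, minterm, add_comm]
  · intro a
    have : ∑ v ∈ Finset.univ.filter
        (fun v : Fin n → ZMod 2 => (∀ i, (u i).val ≤ (v i).val) ∧ u ≠ v), minterm v a
        = if ((∀ i, (u i).val ≤ (a i).val) ∧ u ≠ a) then 1 else 0 := by
      simp only [minterm, Finset.sum_ite_eq, Finset.mem_filter, Finset.mem_univ, true_and]
    rw [this, mono_eq', minterm]
    by_cases h1 : ∀ i, (u i).val ≤ (a i).val
    · by_cases h2 : a = u
      · subst h2; simp [h1]; decide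
      · simp [h1, h2, Ne.symm h2]
    · have h2 : a ≠ u := fun hc => h1 (by subst hc; exact fun i => le_rfl)
      simp [h1, h2]
end

section
/- Let h be a coincident Boolean function with n variables with h ≠ 0. Then 2·deg(h) ≥ n, i.e. deg(h) ≥ n/2. -/
theorem stmt10 (n : ℕ) (h : (Fin n → ZMod 2) → ZMod 2)
    (hcoin : mobius h = h) (hne : h ≠ 0) :
    n ≤ 2 * degree h := by
  classical
  have hzo : ∀ x : ZMod 2, x = 0 ∨ x = 1 := by decide
  have hxx : ∀ x : ZMod 2, x + x = 0 := by decide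
  set S : Finset (Fin n → ZMod 2) := Finset.univ.filter (fun u => h u = 1) with hS
  have hdeg : degree h = S.sup hwt := by
    unfold degree; rw [hcoin]
  have hSne : S.Nonempty := by
    by_contra hc
    apply hne
    funext u
    rcases hzo (h u) with h0 | h1
    · exact h0
    · exact absurd ⟨u, by simp [hS, h1]⟩ hc
  obtain ⟨a, haS, hamax⟩ := Finset.exists_mem_eq_sup S hSne hwt
  set d : ℕ := hwt a with hd
  have ha1 : h a = 1 := (Finset.mem_filter.mp haS).2
  have hmax : ∀ v, h v = 1 → hwt v ≤ d := by
    intro v hv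
    have hvS : v ∈ S := Finset.mem_filter.mpr ⟨Finset.mem_univ _, hv⟩
    calc hwt v ≤ S.sup hwt := Finset.le_sup hvS
    _ = d := hamax
  -- The set of u lying above the complement of a
  set U : Finset (Fin n → ZMod 2) :=
    Finset.univ.filter (fun u => ∀ i, a i = 0 → u i = 1) with hU
  -- key computation: ∑ u in U, h u = 1
  have key : ∑ u ∈ U, h u = 1 := by
    have step1 : ∑ u ∈ U, h u = ∑ v : Fin n → ZMod 2,
        ∑ u ∈ U.filter (fun u => ∀ i, (v i).val ≤ (u i).val), h v := by
      rw [show (∑ u ∈ U, h u) = ∑ u ∈ U, mobius h u from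
        Finset.sum_congr rfl (fun u _ => by rw [hcoin])]
      unfold mobius
      refine Finset.sum_comm' ?_
      intro x y
      simp only [Finset.mem_filter, Finset.mem_univ, true_and, and_true]
    rw [step1]
    rw [Finset.sum_eq_single_of_mem a (Finset.mem_univ a)]
    · -- the term at v = a
      have hsing : U.filter (fun u => ∀ i, (a i).val ≤ (u i).val) = {fun _ => 1} := by
        ext u
        simp only [Finset.mem_filter, Finset.mem_singleton, hU, Finset.mem_univ, true_and]
        constructor
        · rintro ⟨h1, h2⟩
          funext i
          rcases hzo (a i) with h0 | hone
          · exact h1 i h0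
          · have hle := h2 i
            rw [hone] at hle
            rcases hzo (u i) with h0' | h1'
            · rw [h0'] at hle; exact absurd hle (by decide)
            · exact h1'
        · rintro rfl
          constructor
          · intro i _; rfl
          · intro i
            rcases hzo (a i) with h0 | h0 <;> simp [h0, ZMod.val_one]
      rw [hsing, Finset.sum_singleton, ha1]
    · intro v _ hva
      by_cases hle : ∀ i, (a i).val ≤ (v i).val
      · -- a ≼ v, v ≠ a : h v = 0 since hwt v > d
        have hsub : Finset.univ.filter (fun i => a i = 1) ⊆
            Finset.univ.filter (fun i => v i = 1) := by
          intro i hi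
          simp only [Finset.mem_filter, Finset.mem_univ, true_and] at hi ⊢
          have hle' := hle i
          rw [hi] at hle'
          rcases hzo (v i) with h0 | h1
          · rw [h0] at hle'; exact absurd hle' (by decide)
          · exact h1
        have hne' : Finset.univ.filter (fun i => a i = 1) ≠
            Finset.univ.filter (fun i => v i = 1) := by
          intro hcontra
          apply hva
          funext i
          rcases hzo (v i) with h0 | h1
          · rcases hzo (a i) with h0' | h1'
            · rw [h0, h0']
            · have hmem : i ∈ Finset.univ.filter (fun i => v i = 1) := by
                rw [← hcontra]; simp [h1']
              simp only [Finset.mem_filter, Finset.mem_univ, true_and] at hmem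
              exact absurd (hmem.symm.trans h0) (by decide)
          · have hmem : i ∈ Finset.univ.filter (fun i => a i = 1) := by
              rw [hcontra]; simp [h1]
            simp only [Finset.mem_filter, Finset.mem_univ, true_and] at hmem
            rw [h1, hmem]
        have hlt : d < hwt v := Finset.card_lt_card (lt_of_le_of_ne hsub hne')
        have hv0 : h v = 0 := by
          rcases hzo (h v) with h0 | h1
          · exact h0
          · exact absurd (hmax v h1) (by omega)
        simp [hv0]
      · -- ¬ a ≼ v : the fiber has even cardinality, sum vanishes by involution
        push_neg at hle
        obtain ⟨j, hj⟩ := hle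
        have haj : a j = 1 := by
          rcases hzo (a j) with h0 | h1
          · rw [h0] at hj; simp [ZMod.val_zero] at hj
          · exact h1
        have hvj : v j = 0 := by
          rcases hzo (v j) with h0 | h1
          · exact h0
          · rw [h1, haj] at hj; exact absurd hj (by simp)
        apply Finset.sum_involution
          (g := fun u _ => Function.update u j (u j + 1))
        · intro u _
          exact hxx (h v)
        · intro u _ _ hcontra
          have h2 : u j + 1 = u j := by
            have := congrFun hcontra j
            simpa using this
          have h3 : (1 : ZMod 2) = 0 := by
            apply add_left_cancel (a := u j)
            rw [add_zero]; exact h2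
          exact one_ne_zero h3
        · intro u _
          funext i
          rcases eq_or_ne i j with rfl | hij
          · simp only [Function.update_self]
            rw [add_assoc, hxx, add_zero]
          · simp [Function.update_of_ne hij]
        · intro u hu
          simp only [Finset.mem_filter, hU, Finset.mem_univ, true_and] at hu ⊢
          obtain ⟨h1, h2⟩ := hu
          refine ⟨?_, ?_⟩
          · intro i hi
            rcases eq_or_ne i j with rfl | hij
            · exact absurd (haj.symm.trans hi) (by decide)
            · rw [Function.update_of_ne hij]; exact h1 i hi
          · intro i
            rcases eq_or_ne i j with rfl | hij
            · rw [Function.update_self, hvj]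
              simp only [ZMod.val_zero]
              exact Nat.zero_le _
            · rw [Function.update_of_ne hij]; exact h2 i
  -- extract a support element above the complement of a
  have hne1 : ∑ u ∈ U, h u ≠ 0 := by rw [key]; exact one_ne_zero
  obtain ⟨u, huU, hu0⟩ := Finset.exists_ne_zero_of_sum_ne_zero hne1
  have hu1 : h u = 1 := (hzo (h u)).resolve_left hu0
  have hud : hwt u ≤ d := hmax u hu1
  have hcompl : (Finset.univ.filter (fun i => a i = 0)).card ≤ hwt u := by
    apply Finset.card_le_card
    intro i hi
    simp only [Finset.mem_filter, Finset.mem_univ, true_and] at hi ⊢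
    exact (Finset.mem_filter.mp huU).2 i hi
  have hcard : (Finset.univ.filter (fun i => a i = 0)).card + d = n := by
    have hsplit := Finset.card_filter_add_card_filter_not
      (s := Finset.univ) (p := fun i : Fin n => a i = 0)
    simp only [Finset.card_univ, Fintype.card_fin] at hsplit
    have heq : Finset.univ.filter (fun i : Fin n => ¬ a i = 0) =
        Finset.univ.filter (fun i : Fin n => a i = 1) := by
      apply Finset.filter_congr
      intro i _
      rcases hzo (a i) with h0 | h0 <;> simp [h0]
    rw [heq] at hsplit
    unfold d
    unfold hwt
    omega
  rw [hdeg, hamax]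
  omega
end

section
/- Let n ≥ 1 and let h be a coincident Boolean function with n variables, viewed as a function of (y,b) ∈ 𝔽₂ⁿ⁻¹ × 𝔽₂. Then there exists a unique Boolean function g with n−1 variables such that for all y ∈ 𝔽₂ⁿ⁻¹ and b ∈ 𝔽₂, h(y,b) = (1 ⊕ b)·(g(y) ⊕ μₙ₋₁(g)(y)) ⊕ b·g(y) (equivalently, h(y,0) = g(y) ⊕ μₙ₋₁(g)(y) and h(y,1) = g(y)); moreover h = ĝ ⊕ μₙ(ĝ), where ĝ is the Boolean function with n variables defined by ĝ(y,b) = g(y). -/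
/-- Möbius transform on 𝔽₂^m × 𝔽₂, identified with 𝔽₂^(m+1) with the
componentwise partial order. -/
def mobiusP {m : ℕ} (F : ((Fin m → ZMod 2) × ZMod 2) → ZMod 2) :
    ((Fin m → ZMod 2) × ZMod 2) → ZMod 2 :=
  fun p => ∑ q ∈ Finset.univ.filter
    (fun q : (Fin m → ZMod 2) × ZMod 2 =>
      (∀ i, (q.1 i).val ≤ (p.1 i).val) ∧ (q.2).val ≤ (p.2).val), F q

lemma mobiusP_eval {m : ℕ} (F : ((Fin m → ZMod 2) × ZMod 2) → ZMod 2)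
    (y : Fin m → ZMod 2) (b : ZMod 2) :
    mobiusP F (y, b) =
      ∑ v ∈ Finset.univ.filter (fun v : Fin m → ZMod 2 => ∀ i, (v i).val ≤ (y i).val),
        ∑ c ∈ Finset.univ.filter (fun c : ZMod 2 => c.val ≤ b.val), F (v, c) := by
  dsimp only [mobiusP]
  have : (Finset.univ.filter
      (fun q : (Fin m → ZMod 2) × ZMod 2 =>
        (∀ i, (q.1 i).val ≤ (y i).val) ∧ (q.2).val ≤ b.val)) =
      (Finset.univ.filter (fun v : Fin m → ZMod 2 => ∀ i, (v i).val ≤ (y i).val)) ×ˢ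
      (Finset.univ.filter (fun c : ZMod 2 => c.val ≤ b.val)) := by
    ext q; simp [Finset.mem_filter, Finset.mem_product, and_assoc]
  rw [this, Finset.sum_product]

lemma mobiusP_zero {m : ℕ} (F : ((Fin m → ZMod 2) × ZMod 2) → ZMod 2)
    (y : Fin m → ZMod 2) :
    mobiusP F (y, 0) = mobius (fun v => F (v, 0)) y := by
  rw [mobiusP_eval]
  have : Finset.univ.filter (fun c : ZMod 2 => c.val ≤ (0:ZMod 2).val) = {0} := by decide
  rw [this]
  simp [mobius]

lemma mobiusP_one {m : ℕ} (F : ((Fin m → ZMod 2) × ZMod 2) → ZMod 2)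
    (y : Fin m → ZMod 2) :
    mobiusP F (y, 1) = mobius (fun v => F (v, 0)) y + mobius (fun v => F (v, 1)) y := by
  rw [mobiusP_eval]
  have h1 : Finset.univ.filter (fun c : ZMod 2 => c.val ≤ (1:ZMod 2).val) = {0, 1} := by decide
  rw [h1]
  rw [mobius, mobius, ← Finset.sum_add_distrib]
  refine Finset.sum_congr rfl fun v _ => ?_
  rw [Finset.sum_pair (by decide : (0:ZMod 2) ≠ 1)]

lemma zmod2_cases (b : ZMod 2) : b = 0 ∨ b = 1 := by revert b; decide

theorem stmt11 (n : ℕ) (hn : 1 ≤ n)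
    (h : ((Fin (n - 1) → ZMod 2) × ZMod 2) → ZMod 2)
    (hcoin : mobiusP h = h) :
    ∃! g : (Fin (n - 1) → ZMod 2) → ZMod 2,
      (∀ (y : Fin (n - 1) → ZMod 2) (b : ZMod 2),
        h (y, b) = (1 + b) * (g y + mobius g y) + b * g y) ∧
      (∀ p : (Fin (n - 1) → ZMod 2) × ZMod 2,
        h p = g p.1 + mobiusP (fun q => g q.1) p) := by
  set g : (Fin (n - 1) → ZMod 2) → ZMod 2 := fun y => h (y, 1) with hg
  have two0 : (2 : ZMod 2) = 0 := by decide
  have h0 : ∀ y, h (y, 0) = mobius (fun v => h (v, 0)) y := fun y => by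
    conv_lhs => rw [← hcoin]
    exact mobiusP_zero h y
  have h1 : ∀ y, h (y, 1) = h (y, 0) + mobius g y := fun y => by
    conv_lhs => rw [← hcoin]
    rw [mobiusP_one, ← h0]
  have hy0 : ∀ y, h (y, 0) = g y + mobius g y := fun y => by
    have := h1 y
    linear_combination (-1 : ZMod 2) * this - mobius g y * two0
  refine ⟨g, ⟨fun y b => ?_, fun p => ?_⟩, fun g' ⟨hg'1, _⟩ => ?_⟩
  · rcases zmod2_cases b with rfl | rfl
    · simpa using hy0 y
    · have : (1 + 1 : ZMod 2) = 0 := by decide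
      rw [this, zero_mul, zero_add, one_mul]
  · obtain ⟨y, b⟩ := p
    rcases zmod2_cases b with rfl | rfl
    · rw [mobiusP_zero]
      exact hy0 y
    · rw [mobiusP_one]
      have : mobius (fun v => g v) y + mobius (fun v => g v) y = 0 := by
        linear_combination mobius (fun v => g v) y * two0
      simp only []
      rw [this, add_zero]
  · funext y
    have := hg'1 y 1
    have e : (1 + 1 : ZMod 2) = 0 := by decide
    rw [e, zero_mul, zero_add, one_mul] at this
    exact this.symm
end

section
/- Let n ∈ ℕ and 0 < k < n. Let f₁ be a Boolean function with k variables and f₂ a Boolean function with n−k variables, and identify 𝔽₂ⁿ with 𝔽₂ᵏ × 𝔽₂ⁿ⁻ᵏ; set f(y,z) = f₁(y)·f₂(z). If f₁ and f₂ are coincident then f is coincident; conversely, if f₁ ≠ 0, f₂ ≠ 0 and f is coincident, then both f₁ and f₂ are coincident. -/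
lemma key {k m : ℕ} (f1 : (Fin k → ZMod 2) → ZMod 2) (f2 : (Fin m → ZMod 2) → ZMod 2)
    (f : ((Fin k → ZMod 2) × (Fin m → ZMod 2)) → ZMod 2)
    (hf : ∀ y z, f (y, z) = f1 y * f2 z) (y : Fin k → ZMod 2) (z : Fin m → ZMod 2) :
    mobiusPP f (y, z) = mobius f1 y * mobius f2 z := by
  unfold mobiusPP mobius
  rw [Finset.sum_mul_sum, ← Finset.sum_product']
  apply Finset.sum_congr
  · ext q
    simp
  · intro q _
    rw [← hf]

theorem stmt14 (n k : ℕ) (hk : 0 < k) (hkn : k < n)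
    (f1 : (Fin k → ZMod 2) → ZMod 2) (f2 : (Fin (n - k) → ZMod 2) → ZMod 2)
    (f : ((Fin k → ZMod 2) × (Fin (n - k) → ZMod 2)) → ZMod 2)
    (hf : ∀ y z, f (y, z) = f1 y * f2 z) :
    (mobius f1 = f1 → mobius f2 = f2 → mobiusPP f = f) ∧
    (f1 ≠ 0 → f2 ≠ 0 → mobiusPP f = f → mobius f1 = f1 ∧ mobius f2 = f2) := by
  constructor
  · intro h1 h2
    funext p
    obtain ⟨y, z⟩ := p
    rw [key f1 f2 f hf, h1, h2, hf]
  · intro hf1 hf2 hF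
    have one : ∀ a : ZMod 2, a ≠ 0 → a = 1 := by decide
    have mul1 : ∀ a b : ZMod 2, a * b = 1 → a = 1 ∧ b = 1 := by decide
    obtain ⟨y0, hy0⟩ := Function.ne_iff.mp hf1
    obtain ⟨z0, hz0⟩ := Function.ne_iff.mp hf2
    have hy0 : f1 y0 = 1 := one _ hy0
    have hz0 : f2 z0 = 1 := one _ hz0
    have hall : ∀ y z, mobius f1 y * mobius f2 z = f1 y * f2 z := by
      intro y z
      rw [← key f1 f2 f hf, hF, hf]
    have h00 := hall y0 z0
    rw [hy0, hz0, mul_one] at h00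
    obtain ⟨hm1, hm2⟩ := mul1 _ _ h00
    constructor
    · funext y
      have := hall y z0
      rw [hm2, hz0, mul_one, mul_one] at this
      exact this
    · funext z
      have := hall y0 z
      rw [hm1, hy0, one_mul, one_mul] at this
      exact this
end

section
/- Let n ≥ 1. The number of Boolean functions f with n variables that are both coincident and symmetric equals 2^{⌊n/2⌋ + 1}. -/
open Finset
lemma sum_range_two_mul {M : Type*} [AddCommMonoid M] (m : ℕ) (f : ℕ → M) :
    ∑ k ∈ range (2*m), f k = ∑ j ∈ range m, (f (2*j) + f (2*j+1)) := by
  induction m with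
  | zero => simp
  | succ m ih => rw [Nat.mul_succ, sum_range_succ, sum_range_succ, sum_range_succ, ← ih]; ring_nf; rw [add_assoc]

lemma sum_triangle {M : Type*} [AddCommMonoid M] (m : ℕ) (f : ℕ → ℕ → M) :
    ∑ j ∈ range m, ∑ i ∈ range j, f i j = ∑ i ∈ range m, ∑ j ∈ Ico (i+1) m, f i j := by
  induction m with
  | zero => simp
  | succ m ih =>
    have h : ∀ i ∈ range m, ∑ j ∈ Ico (i+1) (m+1), f i j = ∑ j ∈ Ico (i+1) m, f i j + f i m :=
      fun i hi => Finset.sum_Ico_succ_top (by rw [mem_range] at hi; omega) _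
    rw [sum_range_succ, ih, sum_range_succ, sum_congr rfl h, sum_add_distrib]
    simp

lemma coeff_vanish (i m : ℕ) (him : i < m) :
    ∑ j ∈ Ico (i+1) m, ((m.choose j : ℕ) : ZMod 2) * ((j.choose i : ℕ)) = 0 := by
  have key : ∀ j ∈ Ico (i+1) m, ((m.choose j : ℕ) : ZMod 2) * ((j.choose i : ℕ))
      = (m.choose i : ℕ) * ((m-i).choose (j-i) : ℕ) := by
    intro j hj
    rw [mem_Ico] at hj
    rw [← Nat.cast_mul, ← Nat.cast_mul, Nat.choose_mul (by omega)]
  rw [sum_congr rfl key, ← mul_sum]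
  have h2 : ∑ j ∈ Ico (i+1) m, (((m-i).choose (j-i) : ℕ) : ZMod 2) = 0 := by
    rw [Finset.sum_Ico_eq_sum_range]
    set d := m - i with hd
    have hd1 : 1 ≤ d := by omega
    have hrw : ∀ t, (i + 1 + t - i) = t + 1 := fun t => by omega
    simp_rw [hrw]
    have hrange : m - (i+1) = d - 1 := by omega
    rw [hrange]
    have htot : ∑ t ∈ range (d+1), ((d.choose t : ℕ) : ZMod 2) = ((2^d : ℕ) : ZMod 2) := by
      rw [← Nat.cast_sum, Nat.sum_range_choose]
    have hz : ((2^d : ℕ) : ZMod 2) = 0 := by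
      have h2' : (2 : ZMod 2) = 0 := by decide
      push_cast
      rw [h2', zero_pow (by omega)]
    rw [hz] at htot
    rw [Finset.sum_range_succ'] at htot
    have hsucc : ∑ t ∈ range d, ((d.choose (t+1) : ℕ) : ZMod 2)
        = ∑ t ∈ range (d-1), ((d.choose (t+1) : ℕ) : ZMod 2) + ((d.choose d : ℕ) : ZMod 2) := by
      have hde : d - 1 + 1 = d := by omega
      have := Finset.sum_range_succ (fun t => ((d.choose (t+1) : ℕ) : ZMod 2)) (d-1)
      rw [hde] at this
      rw [this]
    rw [hsucc] at htot
    simp only [Nat.choose_self, Nat.choose_zero_right, Nat.cast_one] at htot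
    have h11 : (1 : ZMod 2) + 1 = 0 := by decide
    rw [add_assoc, h11, add_zero] at htot
    exact htot
  rw [h2, mul_zero]

lemma lucas2 (a b : ℕ) : ((a.choose b : ℕ) : ZMod 2) = ((a % 2).choose (b % 2) * ((a / 2).choose (b / 2)) : ℕ) := by
  haveI : Fact (Nat.Prime 2) := ⟨Nat.prime_two⟩
  exact (ZMod.natCast_eq_natCast_iff _ _ _).mpr Choose.choose_modEq_choose_mod_mul_choose_div_nat
lemma luc_oe (m j : ℕ) : ((2*m+1).choose (2*j) : ZMod 2) = (m.choose j : ℕ) := by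
  rw [lucas2]; push_cast; simp [Nat.mul_add_mod, Nat.mul_div_cancel_left, Nat.mul_add_div]
lemma luc_oo (m j : ℕ) : ((2*m+1).choose (2*j+1) : ZMod 2) = (m.choose j : ℕ) := by
  rw [lucas2]; push_cast; simp [Nat.mul_add_mod, Nat.mul_add_div]
lemma luc_eo (m j : ℕ) : ((2*m).choose (2*j+1) : ZMod 2) = 0 := by
  rw [lucas2]; push_cast; simp [Nat.mul_add_mod, Nat.mul_mod_right]
lemma luc_ee (m j : ℕ) : ((2*m).choose (2*j) : ZMod 2) = (m.choose j : ℕ) := by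
  rw [lucas2]; push_cast; simp [Nat.mul_mod_right, Nat.mul_div_cancel_left]

def Pcond (n : ℕ) (g : ℕ → ZMod 2) : Prop :=
  ∀ w ∈ range (n+1), ∑ k ∈ range w, ((w.choose k : ℕ) : ZMod 2) * g k = 0

def Qcond (n : ℕ) (g : ℕ → ZMod 2) : Prop :=
  g 0 = 0 ∧ ∀ m, 2*m+1 ≤ n →
    g (2*m) = ∑ j ∈ range m, ((m.choose j : ℕ) : ZMod 2) * (g (2*j) + g (2*j+1))

lemma pair_sum_odd (m : ℕ) (g : ℕ → ZMod 2) :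
    ∑ k ∈ range (2*m), (((2*m+1).choose k : ℕ) : ZMod 2) * g k
      = ∑ j ∈ range m, ((m.choose j : ℕ) : ZMod 2) * (g (2*j) + g (2*j+1)) := by
  rw [sum_range_two_mul]
  exact sum_congr rfl fun j _ => by rw [luc_oe, luc_oo, mul_add]

lemma P_iff_Q {n : ℕ} (hn : 1 ≤ n) (g : ℕ → ZMod 2) : Pcond n g ↔ Qcond n g := by
  constructor
  · intro hP
    constructor
    · have h1 := hP 1 (mem_range.mpr (by omega))
      simpa using h1
    · intro m hm
      have h := hP (2*m+1) (mem_range.mpr (by omega))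
      rw [sum_range_succ, pair_sum_odd] at h
      have hc : (((2*m+1).choose (2*m) : ℕ) : ZMod 2) = 1 := by
        rw [luc_oe, Nat.choose_self, Nat.cast_one]
      rw [hc, one_mul] at h
      have := CharTwo.add_eq_iff_eq_add.mp h
      rw [zero_add] at this
      exact this.symm
  · intro hQ w hw
    rw [mem_range] at hw
    rcases Nat.even_or_odd w with he | ho
    · -- even case
      obtain ⟨m', hm'⟩ := he
      obtain ⟨m, hm⟩ : ∃ m, w = 2*m := ⟨m', by omega⟩
      subst hm
      rw [sum_range_two_mul]
      have step1 : ∀ j ∈ range m, (((2*m).choose (2*j) : ℕ) : ZMod 2) * g (2*j)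
          + (((2*m).choose (2*j+1) : ℕ) : ZMod 2) * g (2*j+1)
          = ((m.choose j : ℕ) : ZMod 2) * g (2*j) := by
        intro j _
        rw [luc_ee, luc_eo, zero_mul, add_zero]
      rw [sum_congr rfl step1]
      have step2 : ∀ j ∈ range m, ((m.choose j : ℕ) : ZMod 2) * g (2*j)
          = ∑ i ∈ range j, (((m.choose j : ℕ) : ZMod 2) * ((j.choose i : ℕ) : ZMod 2))
              * (g (2*i) + g (2*i+1)) := by
        intro j hj
        rw [mem_range] at hj
        rw [hQ.2 j (by omega), mul_sum]
        exact sum_congr rfl fun i _ => by ring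
      rw [sum_congr rfl step2, sum_triangle]
      refine sum_eq_zero fun i hi => ?_
      rw [mem_range] at hi
      rw [← sum_mul, coeff_vanish i m hi, zero_mul]
    · -- odd case
      obtain ⟨m', hm'⟩ := ho
      obtain ⟨m, hm⟩ : ∃ m, w = 2*m+1 := ⟨m', by omega⟩
      subst hm
      rw [sum_range_succ, pair_sum_odd]
      have hc : (((2*m+1).choose (2*m) : ℕ) : ZMod 2) = 1 := by
        rw [luc_oe, Nat.choose_self, Nat.cast_one]
      rw [hc, one_mul, ← hQ.2 m (by omega)]
      exact CharTwo.add_self_eq_zero _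

def G (n : ℕ) (t : ℕ → ZMod 2) : ℕ → ZMod 2
  | w =>
    if w % 2 = 1 ∨ n ≤ w then t (w / 2)
    else ∑ j ∈ (Finset.range (w / 2)).attach,
      ((w/2).choose j.1 : ZMod 2) * (G n t (2*j.1) + G n t (2*j.1+1))
  termination_by w => w
  decreasing_by
    all_goals (rename_i h _; have hj := Finset.mem_range.mp j.2; omega)

lemma G_odd (n : ℕ) (t : ℕ → ZMod 2) (w : ℕ) (h : w % 2 = 1 ∨ n ≤ w) :
    G n t w = t (w / 2) := by rw [G, if_pos h]

lemma G_even (n : ℕ) (t : ℕ → ZMod 2) (w : ℕ) (h1 : w % 2 = 0) (h2 : w < n) :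
    G n t w = ∑ j ∈ Finset.range (w / 2),
      ((w/2).choose j : ZMod 2) * (G n t (2*j) + G n t (2*j+1)) := by
  rw [G, if_neg (by omega)]
  exact Finset.sum_attach (Finset.range (w/2)) (fun j => ((w/2).choose j : ZMod 2) * (G n t (2*j) + G n t (2*j+1)))


lemma Q_G {n : ℕ} (hn : 1 ≤ n) (t : ℕ → ZMod 2) : Qcond n (G n t) := by
  constructor
  · rw [G_even n t 0 rfl (by omega)]; simp
  · intro m hm
    rw [G_even n t (2*m) (by omega) (by omega)]
    simp [Nat.mul_div_cancel_left]

lemma G_pos {n : ℕ} (t : ℕ → ZMod 2) (j : ℕ) (hj : j ≤ n/2) :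
    G n t (min (2*j+1) n) = t j := by
  rcases le_or_gt (2*j+1) n with h | h
  · rw [min_eq_left h, G_odd n t _ (Or.inl (by omega))]
    congr 1; omega
  · have hje : j = n/2 ∧ n % 2 = 0 := by omega
    rw [min_eq_right (by omega), G_odd n t _ (Or.inr le_rfl)]
    congr 1; omega

lemma Q_unique {n : ℕ} (hn : 1 ≤ n) {g g' : ℕ → ZMod 2} (hg : Qcond n g) (hg' : Qcond n g')
    (ha : ∀ j ≤ n/2, g (min (2*j+1) n) = g' (min (2*j+1) n)) :
    ∀ w ≤ n, g w = g' w := by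
  intro w
  induction w using Nat.strong_induction_on with
  | _ w ih =>
    intro hw
    rcases Nat.even_or_odd w with he | ho
    · obtain ⟨m', hm'⟩ := he
      rcases eq_or_lt_of_le hw with heq | hlt
      · -- w = n even
        have hj : (n/2 : ℕ) ≤ n/2 := le_rfl
        have := ha (n/2) hj
        rwa [min_eq_right (by omega), ← heq] at this
      · -- w even < n
        have hm : w = 2*(m') := by omega
        rw [hm, hg.2 m' (by omega), hg'.2 m' (by omega)]
        exact sum_congr rfl fun j hj => by
          rw [mem_range] at hj
          rw [ih (2*j) (by omega) (by omega), ih (2*j+1) (by omega) (by omega)]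
    · obtain ⟨m', hm'⟩ := ho
      have := ha m' (by omega)
      rwa [min_eq_left (by omega), ← hm'] at this

-- counting the set of Fin-functions whose extension satisfies Qcond
noncomputable def gext (n : ℕ) (g : Fin (n+1) → ZMod 2) : ℕ → ZMod 2 :=
  fun k => if h : k < n+1 then g ⟨k, h⟩ else 0

open scoped Classical in
lemma card_Eset {n : ℕ} (hn : 1 ≤ n) :
    (Finset.univ.filter (fun g : Fin (n+1) → ZMod 2 => Qcond n (gext n g))).card
      = 2 ^ (n/2 + 1) := by
  classical
  have hcard : Fintype.card (Fin (n/2+1) → ZMod 2) = 2^(n/2+1) := by simp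
  rw [← hcard, ← Finset.card_univ]
  apply Finset.card_bij' (i := fun g _ => fun j : Fin (n/2+1) => gext n g (min (2*j.1+1) n))
    (j := fun t _ => fun w : Fin (n+1) => G n (fun j => if h : j < n/2+1 then t ⟨j, h⟩ else 0) w.1)
  · intro g hg
    exact Finset.mem_univ _
  · intro t ht
    rw [Finset.mem_filter]
    refine ⟨Finset.mem_univ _, ?_⟩
    set t' := fun j => if h : j < n/2+1 then t ⟨j, h⟩ else 0 with ht'
    have hagree : ∀ k ≤ n, gext n (fun w : Fin (n+1) => G n t' w.1) k = G n t' k := by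
      intro k hk
      rw [gext, dif_pos (by omega)]
    have hQ := Q_G hn t'
    constructor
    · rw [hagree 0 (by omega)]; exact hQ.1
    · intro m hm
      rw [hagree (2*m) (by omega), hQ.2 m hm]
      exact sum_congr rfl fun j hj => by
        rw [mem_range] at hj
        rw [hagree (2*j) (by omega), hagree (2*j+1) (by omega)]
  · -- left inverse : j ∘ i = id on E
    intro g hg
    rw [Finset.mem_filter] at hg
    funext w
    set t' := fun j => if h : j < n/2+1 then gext n g (min (2*j+1) n) else 0 with ht'
    have hQG := Q_G hn t'
    have hagree : ∀ j ≤ n/2, G n t' (min (2*j+1) n) = gext n g (min (2*j+1) n) := by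
      intro j hj
      rw [G_pos t' j hj, ht']
      exact dif_pos (by omega)
    have := Q_unique hn hQG hg.2 hagree w.1 (by omega)
    rw [this, gext, dif_pos (by omega)]
  · -- right inverse
    intro t ht
    funext j
    set t' := fun k => if h : k < n/2+1 then t ⟨k, h⟩ else 0 with ht'
    have : gext n (fun w : Fin (n+1) => G n t' w.1) (min (2*j.1+1) n) = G n t' (min (2*j.1+1) n) := by
      rw [gext, dif_pos (by omega)]
    rw [this, G_pos t' j.1 (by omega)]
    exact dif_pos j.2


variable {n : ℕ}

def supp (u : Fin n → ZMod 2) : Finset (Fin n) := univ.filter (fun i => u i = 1)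
def wt (u : Fin n → ZMod 2) : ℕ := (supp u).card
def indf (s : Finset (Fin n)) : Fin n → ZMod 2 := fun i => if i ∈ s then 1 else 0
def bvec (n : ℕ) (k : ℕ) : Fin n → ZMod 2 := fun i => if i.1 < k then 1 else 0

lemma mem_supp {u : Fin n → ZMod 2} {i : Fin n} : i ∈ supp u ↔ u i = 1 := by
  simp [supp]

lemma zmod2_le : ∀ a b : ZMod 2, (a.val ≤ b.val ↔ (a = 1 → b = 1)) := by decide
lemma zmod2_cases_s19 : ∀ a : ZMod 2, a = 0 ∨ a = 1 := by decide

lemma supp_indf (s : Finset (Fin n)) : supp (indf s) = s := by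
  ext i
  simp only [mem_supp, indf]
  split <;> simp_all

lemma indf_supp (u : Fin n → ZMod 2) : indf (supp u) = u := by
  funext i
  simp only [indf, mem_supp]
  rcases zmod2_cases_s19 (u i) with h | h <;> rw [h] <;> simp

lemma prec_iff {v u : Fin n → ZMod 2} :
    (∀ i, (v i).val ≤ (u i).val) ↔ supp v ⊆ supp u := by
  constructor
  · intro h i hi
    rw [mem_supp] at hi ⊢
    exact (zmod2_le _ _).mp (h i) hi
  · intro h i
    exact (zmod2_le _ _).mpr fun hv => mem_supp.mp (h (mem_supp.mpr hv))

lemma wt_le (u : Fin n → ZMod 2) : wt u ≤ n := by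
  have := card_le_univ (supp u)
  simpa [wt] using this

lemma wt_bvec {k : ℕ} (hk : k ≤ n) : wt (bvec n k) = k := by
  have hsupp : supp (bvec n k) = Finset.attachFin (range k) (fun m hm => by
      rw [mem_range] at hm; omega) := by
    ext i
    rw [mem_supp, Finset.mem_attachFin, mem_range, bvec]
    split <;> simp_all
  rw [wt, hsupp, Finset.card_attachFin, Finset.card_range]

lemma wt_indf (s : Finset (Fin n)) : wt (indf s) = s.card := by rw [wt, supp_indf]

-- symmetric functions are constant on weight classes
lemma symm_wt_eq (f : (Fin n → ZMod 2) → ZMod 2)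
    (hf : ∀ (σ : Equiv.Perm (Fin n)) (a : Fin n → ZMod 2), f (a ∘ σ) = f a)
    {u v : Fin n → ZMod 2} (h : wt u = wt v) : f u = f v := by
  classical
  have hcard : Fintype.card {x // x ∈ supp v} = Fintype.card {x // x ∈ supp u} := by
    simpa [Fintype.card_coe, wt] using h.symm
  let e : {x // x ∈ supp v} ≃ {x // x ∈ supp u} := Fintype.equivOfCardEq hcard
  have hcomp : u ∘ (e.extendSubtype : Equiv.Perm (Fin n)) = v := by
    funext i
    by_cases hi : i ∈ supp v
    · have h1 : (e.extendSubtype i) ∈ supp u := e.extendSubtype_mem i hi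
      have h2 : u (e.extendSubtype i) = 1 := mem_supp.mp h1
      have h3 : v i = 1 := mem_supp.mp hi
      simp only [Function.comp_apply, h2, h3]
    · have h1 : ¬ (e.extendSubtype i) ∈ supp u := e.extendSubtype_not_mem i hi
      have h2 : u (e.extendSubtype i) = 0 := by
        rcases zmod2_cases_s19 (u (e.extendSubtype i)) with h' | h'
        · exact h'
        · exact absurd (mem_supp.mpr h') h1
      have h3 : v i = 0 := by
        rcases zmod2_cases_s19 (v i) with h' | h'
        · exact h'
        · exact absurd (mem_supp.mpr h') hi
      simp only [Function.comp_apply, h2, h3]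
  calc f u = f (u ∘ e.extendSubtype) := (hf _ u).symm
    _ = f v := by rw [hcomp]

lemma wt_comp_perm (σ : Equiv.Perm (Fin n)) (a : Fin n → ZMod 2) : wt (a ∘ σ) = wt a := by
  classical
  have hsupp : supp (a ∘ σ) = (supp a).image σ.symm := by
    ext i
    simp only [mem_supp, Function.comp_apply, Finset.mem_image]
    constructor
    · intro h
      exact ⟨σ i, h, σ.symm_apply_apply i⟩
    · rintro ⟨x, hx, rfl⟩
      rwa [σ.apply_symm_apply]
  rw [wt, wt, hsupp, Finset.card_image_of_injective _ σ.symm.injective]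

lemma mobius_wt (h : ℕ → ZMod 2) (u : Fin n → ZMod 2) :
    mobius (fun v => h (wt v)) u = ∑ k ∈ range (wt u + 1), (wt u).choose k • h k := by
  classical
  rw [mobius]
  have key : ∑ v ∈ Finset.univ.filter (fun v : Fin n → ZMod 2 => ∀ i, (v i).val ≤ (u i).val),
      h (wt v) = ∑ s ∈ (supp u).powerset, h s.card := by
    apply Finset.sum_bij' (i := fun v _ => supp v) (j := fun s _ => indf s)
    · intro v hv
      rw [Finset.mem_filter] at hv
      exact Finset.mem_powerset.mpr (prec_iff.mp hv.2)
    · intro s hs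
      rw [Finset.mem_filter]
      exact ⟨Finset.mem_univ _, prec_iff.mpr (by rw [supp_indf]; exact Finset.mem_powerset.mp hs)⟩
    · intro v _; exact indf_supp v
    · intro s _; exact supp_indf s
    · intro v _; rfl
  rw [key, Finset.sum_powerset_apply_card]
  rfl


theorem stmt19 (n : ℕ) (hn : 1 ≤ n) :
    (Finset.univ.filter
      (fun f : (Fin n → ZMod 2) → ZMod 2 =>
        mobius f = f ∧
        ∀ (σ : Equiv.Perm (Fin n)) (a : Fin n → ZMod 2), f (a ∘ σ) = f a)).card
      = 2 ^ (n / 2 + 1) := by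
  classical
  rw [← card_Eset hn]
  apply Finset.card_bij'
    (i := fun f _ => fun w : Fin (n+1) => f (bvec n w.1))
    (j := fun g _ => fun u : Fin n → ZMod 2 => gext n g (wt u))
  · -- forward map lands in Eset
    intro f hf
    rw [Finset.mem_filter] at hf ⊢
    obtain ⟨-, hmob, hsym⟩ := hf
    refine ⟨Finset.mem_univ _, ?_⟩
    set h : ℕ → ZMod 2 := fun k => f (bvec n k) with hh
    have hS : ∀ v, f v = h (wt v) := by
      intro v
      exact symm_wt_eq f hsym (wt_bvec (wt_le v)).symm
    have hfeq : f = fun v => h (wt v) := funext hS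
    rw [← P_iff_Q hn]
    intro w hw
    rw [mem_range] at hw
    have hw' : w ≤ n := by omega
    have hmw := congrFun hmob (bvec n w)
    rw [hfeq] at hmw
    rw [mobius_wt h (bvec n w), wt_bvec hw'] at hmw
    rw [Finset.sum_range_succ, Nat.choose_self, one_smul] at hmw
    have hrhs : (fun v : Fin n → ZMod 2 => h (wt v)) (bvec n w) = h w := by
      show h (wt (bvec n w)) = h w
      rw [wt_bvec hw']
    rw [hrhs] at hmw
    have hzero : ∑ k ∈ range w, w.choose k • h k = 0 := by
      have := hmw
      rwa [add_eq_right] at this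
    calc ∑ k ∈ range w, ((w.choose k : ℕ) : ZMod 2) * gext n (fun w : Fin (n+1) => f (bvec n w.1)) k
        = ∑ k ∈ range w, w.choose k • h k := by
          refine sum_congr rfl fun k hk => ?_
          rw [mem_range] at hk
          rw [nsmul_eq_mul]
          congr 1
          rw [gext, dif_pos (by omega)]
      _ = 0 := hzero
  · -- backward map lands in target
    intro g hg
    rw [Finset.mem_filter] at hg ⊢
    have hP : Pcond n (gext n g) := (P_iff_Q hn _).mpr hg.2
    refine ⟨Finset.mem_univ _, ?_, ?_⟩
    · funext u
      have hwu : wt u ≤ n := wt_le u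
      rw [show (fun u : Fin n → ZMod 2 => gext n g (wt u)) = (fun v => gext n g (wt v)) from rfl]
      rw [mobius_wt (gext n g) u, Finset.sum_range_succ, Nat.choose_self, one_smul]
      have h0 := hP (wt u) (mem_range.mpr (by omega))
      have hz : ∑ k ∈ range (wt u), (wt u).choose k • gext n g k = 0 := by
        rw [← h0]
        exact sum_congr rfl fun k hk => by rw [nsmul_eq_mul]
      rw [hz, zero_add]
    · intro σ a
      simp only [wt_comp_perm]
  · -- left inverse
    intro f hf
    rw [Finset.mem_filter] at hf
    obtain ⟨-, hmob, hsym⟩ := hf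
    funext u
    have hwu : wt u ≤ n := wt_le u
    show gext n (fun w : Fin (n+1) => f (bvec n w.1)) (wt u) = f u
    rw [gext, dif_pos (by omega)]
    exact symm_wt_eq f hsym (wt_bvec hwu)
  · -- right inverse
    intro g hg
    funext w
    show gext n g (wt (bvec n w.1)) = g w
    rw [wt_bvec (by omega : w.1 ≤ n), gext, dif_pos w.2]
end
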